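/- Let f : K → L be a continuous surjective homomorphism of compact Hausdorff abelian groups and let G be a locally essential subgroup of L. Then f⁻¹(G) is a locally essential subgroup of K. If moreover G is dense in L, then f⁻¹(G) is dense in K. -/

import Mathlib

open Filter Topology Set

universe u

/-- A (Hausdorff) topological abelian group is *minimal* if its topology admits no strictly
coarser Hausdorff group topology; equivalently, every continuous group isomorphism onto a
Hausdorff topological group is open. -/
def IsMinimalGroup (G : Type*) [AddGroup G] [t : TopologicalSpace G] : Prop :=
  ∀ t' : TopologicalSpace G, t ≤ t' →
    @IsTopologicalAddGroup G t' _ → @T2Space G t' → t' = t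

/-- A topological abelian group is *locally minimal* if there is a neighbourhood `V` of `0`
such that every coarser Hausdorff group topology in which `V` is still a neighbourhood of `0`
coincides with the original topology; equivalently, there is a neighbourhood `V` of the
identity such that every continuous group isomorphism `f` onto a Hausdorff topological group
with `f(V)` a neighbourhood of the identity is open. -/
def IsLocallyMinimalGroup (G : Type*) [AddGroup G] [t : TopologicalSpace G] : Prop :=
  ∃ V ∈ @nhds G t 0, ∀ t' : TopologicalSpace G, t ≤ t' →
    @IsTopologicalAddGroup G t' _ → @T2Space G t' → V ∈ @nhds G t' 0 → t' = t

/-- A uniform space is *sequentially complete* if every Cauchy sequence converges. -/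
def SeqComplete (G : Type*) [UniformSpace G] : Prop :=
  ∀ u : ℕ → G, CauchySeq u → ∃ x : G, Tendsto u atTop (nhds x)

/-- The topological weight: the least cardinality of a base of open sets. -/
noncomputable def tweight (X : Type u) [TopologicalSpace X] : Cardinal.{u} :=
  ⨅ b : {s : Set (Set X) // TopologicalSpace.IsTopologicalBasis s}, Cardinal.mk b.1
/-- A subgroup `H` is *essential* if it meets every non-trivial closed subgroup
non-trivially. -/
def IsEssential {G : Type*} [AddGroup G] [TopologicalSpace G] (H : AddSubgroup G) : Prop :=
  ∀ N : AddSubgroup G, IsClosed (N : Set G) → N ≠ ⊥ → H ⊓ N ≠ ⊥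

/-- A subgroup `H` is *locally essential* if there is a neighbourhood `V` of `0` such that
`H` meets non-trivially every non-trivial closed subgroup contained in `V`. -/
def IsLocallyEssential {G : Type*} [AddGroup G] [TopologicalSpace G] (H : AddSubgroup G) :
    Prop :=
  ∃ V ∈ nhds (0 : G), ∀ N : AddSubgroup G, IsClosed (N : Set G) → (N : Set G) ⊆ V →
    N ≠ ⊥ → H ⊓ N ≠ ⊥

/-- A topological abelian group is *`p`-monothetic* if it is a finite cyclic `p`-group or
topologically isomorphic to a subgroup of the `p`-adic integers. -/
def IsPMonothetic (p : ℕ) (hp : p.Prime) (A : Type*) [AddCommGroup A] [TopologicalSpace A] :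
    Prop :=
  haveI : Fact p.Prime := ⟨hp⟩
  (∃ n : ℕ, Nonempty (A ≃+ ZMod (p ^ n))) ∨
    (∃ B : AddSubgroup ℤ_[p], ∃ e : A ≃+ B, Continuous e ∧ Continuous e.symm)

/-- A subgroup `H` is *weakly essential* if for every prime `p` it meets non-trivially every
infinite closed `p`-monothetic subgroup. -/
def IsWeaklyEssential {G : Type*} [AddCommGroup G] [TopologicalSpace G] (H : AddSubgroup G) :
    Prop :=
  ∀ (p : ℕ) (hp : p.Prime) (N : AddSubgroup G), IsClosed (N : Set G) →
    (N : Set G).Infinite → IsPMonothetic p hp N → H ⊓ N ≠ ⊥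

/-- `G[p]`, the subgroup of elements killed by `p`. -/
def pTorsion (G : Type*) [AddCommGroup G] (p : ℕ) : AddSubgroup G where
  carrier := {x | p • x = 0}
  zero_mem' := by simp
  add_mem' := by
    intro a b ha hb
    simp only [Set.mem_setOf_eq, smul_add] at *
    rw [ha, hb, add_zero]
  neg_mem' := by
    intro a ha
    simp only [Set.mem_setOf_eq, smul_neg] at *
    rw [ha, neg_zero]

/-- The socle `Soc(G)`: the subgroup generated by all `G[p]`, `p` prime. -/
def socle (G : Type*) [AddCommGroup G] : AddSubgroup G :=
  ⨆ p ∈ {q : ℕ | q.Prime}, pTorsion G p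

/-- If `f : K → L` is a continuous surjective homomorphism of compact Hausdorff abelian groups
and `G` is a locally essential subgroup of `L`, then `f⁻¹(G)` is locally essential in `K`;
moreover if `G` is dense in `L` then `f⁻¹(G)` is dense in `K`. -/
theorem locallyEssential_comap
    (K L : Type u) [AddCommGroup K] [TopologicalSpace K] [IsTopologicalAddGroup K]
    [CompactSpace K] [T2Space K]
    [AddCommGroup L] [TopologicalSpace L] [IsTopologicalAddGroup L]
    [CompactSpace L] [T2Space L]
    (f : K →+ L) (hf : Continuous f) (hsurj : Function.Surjective f)
    (G : AddSubgroup L) (hG : IsLocallyEssential G) :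
    IsLocallyEssential (G.comap f) ∧
      (Dense (G : Set L) → Dense ((G.comap f : AddSubgroup K) : Set K)) := by
  constructor
  · -- locally essential part
    obtain ⟨V, hV, hVess⟩ := hG
    refine ⟨f ⁻¹' V, hf.continuousAt.preimage_mem_nhds (by simpa using hV), ?_⟩
    intro N hNclosed hNsub hNne
    by_cases hmap : N.map f = ⊥
    · -- N ⊆ ker f ⊆ f⁻¹(G), so the intersection is N itself
      intro h
      apply hNne
      rw [eq_bot_iff] at h ⊢
      intro x hx
      have hfx : f x ∈ N.map f := AddSubgroup.mem_map_of_mem f hx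
      rw [hmap] at hfx
      have hxG : x ∈ G.comap f := by
        simp only [AddSubgroup.mem_comap]
        simpa using (AddSubgroup.mem_bot.mp hfx) ▸ G.zero_mem
      exact h ⟨hxG, hx⟩
    · -- f(N) is a nontrivial closed subgroup of L contained in V
      have hNcompact : IsCompact (N : Set K) := hNclosed.isCompact
      have himgclosed : IsClosed ((N.map f : AddSubgroup L) : Set L) := by
        have : IsCompact (f '' (N : Set K)) := hNcompact.image hf
        simpa [AddSubgroup.coe_map] using this.isClosed
      have himgsub : ((N.map f : AddSubgroup L) : Set L) ⊆ V := by
        rintro y ⟨x, hx, rfl⟩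
        exact hNsub hx
      have := hVess (N.map f) himgclosed himgsub hmap
      rw [AddSubgroup.ne_bot_iff_exists_ne_zero] at this ⊢
      obtain ⟨⟨y, hyG, hyN⟩, hy0⟩ := this
      obtain ⟨x, hxN, hxy⟩ := hyN
      refine ⟨⟨x, ⟨by simpa [AddSubgroup.mem_comap, hxy] using hyG, hxN⟩⟩, ?_⟩
      intro h
      apply hy0
      have hx0 : x = 0 := by simpa using congrArg Subtype.val h
      ext
      simp [← hxy, hx0]
  · -- density part: f is an open map
    intro hGdense
    have hopen : IsOpenMap f := AddMonoidHom.isOpenMap_of_sigmaCompact f hsurj hf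
    rw [dense_iff_inter_open]
    intro U hU hUne
    obtain ⟨x, hx⟩ := hUne
    have hfU : IsOpen (f '' U) := hopen U hU
    have hfUne : (f '' U).Nonempty := ⟨f x, x, hx, rfl⟩
    obtain ⟨y, hyfU, hyG⟩ := (dense_iff_inter_open.mp hGdense) (f '' U) hfU hfUne
    obtain ⟨z, hzU, hzy⟩ := hyfU
    exact ⟨z, hzU, by simp [AddSubgroup.mem_comap, hzy, hyG]⟩
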